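/- (Universal approximation, Theorem 1.) Let d ≥ 1, let K be a compact topological space, and suppose that for every finite word I over the alphabet {1,…,d} (including the empty word ∅) there is a continuous function S^I : K → ℝ such that: (i) S^∅ is the constant function 1; (ii) for all words I of length p and J of length q, S^I · S^J = Σ_{A ⊆ {1,…,p+q}, |A| = p} S^{w_A} pointwise on K, where w_A is the interleaving of I and J determined by A; and (iii) the family {S^I} separates the points of K, i.e. for any x ≠ y in K there is a word I with S^I(x) ≠ S^I(y). Then for every continuous function f : K → ℝ and every ε > 0 there exist finitely many words I₁,…,I_m and real coefficients w₁,…,w_m such that sup_{x ∈ K} | f(x) − Σ_{j=1}^{m} w_j S^{I_j}(x) | < ε; that is, the linear span of {S^I} is dense in C(K, ℝ) with the supremum norm. -/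

import Mathlib

/-- The interleaving `w_A` of the multi-indices `I` (length `p`) and `J` (length `q`)
determined by a subset `A ⊆ {1,…,p+q}` of cardinality `p`: the entries at the
positions of `A`, read in increasing order, are those of `I`, and the entries at the
positions of the complement of `A`, read in increasing order, are those of `J`. -/
def interleave {d p q : ℕ} (I : Fin p → Fin d) (J : Fin q → Fin d)
    (A : Finset (Fin (p + q))) (hA : A.card = p) : Fin (p + q) → Fin d :=
  fun m =>
    if hm : m ∈ A then
      I ⟨(A.filter (fun x => x < m)).card, by
        have h2 : (A.filter (fun x => x < m)).card < A.card :=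
          Finset.card_lt_card ⟨Finset.filter_subset _ _,
            fun hsub => by simpa using hsub hm⟩
        omega⟩
    else
      J ⟨(Aᶜ.filter (fun x => x < m)).card, by
        have hAc : Aᶜ.card = q := by
          have h1 := Finset.card_compl A
          simp only [Fintype.card_fin, hA] at h1
          omega
        have h2 : (Aᶜ.filter (fun x => x < m)).card < Aᶜ.card :=
          Finset.card_lt_card ⟨Finset.filter_subset _ _,
            fun hsub => by simpa using hsub (Finset.mem_compl.mpr hm)⟩
        omega⟩

/-- universal approximation: if `K` is a compact space and
`S : (words over {1,…,d}) → C(K,ℝ)` is a family of continuous functions such that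
`S^∅ = 1`, the shuffle-product identity holds pointwise, and the family separates
the points of `K`, then finite linear combinations of the `S^I` are uniformly
dense in `C(K,ℝ)`. -/
theorem stmt_8 {d : ℕ} (hd : 1 ≤ d) (K : Type*) [TopologicalSpace K] [CompactSpace K]
    (S : List (Fin d) → K → ℝ)
    (hcont : ∀ I, Continuous (S I))
    (hone : ∀ x, S [] x = 1)
    (hshuffle : ∀ (I J : List (Fin d)) (x : K),
      S I x * S J x =
        ∑ A : {A : Finset (Fin (I.length + J.length)) // A.card = I.length},
          S (List.ofFn (interleave I.get J.get A.1 A.2)) x)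
    (hsep : ∀ x y : K, x ≠ y → ∃ I : List (Fin d), S I x ≠ S I y)
    (f : K → ℝ) (hf : Continuous f) (ε : ℝ) (hε : 0 < ε) :
    ∃ (m : ℕ) (Is : Fin m → List (Fin d)) (w : Fin m → ℝ),
      ∀ x : K, |f x - ∑ j, w j * S (Is j) x| < ε := by
  classical
  set F : List (Fin d) → C(K, ℝ) := fun I => ⟨S I, hcont I⟩ with hF
  set M : Submodule ℝ C(K, ℝ) := Submodule.span ℝ (Set.range F) with hM
  have hmemF : ∀ I, F I ∈ M := fun I => Submodule.subset_span ⟨I, rfl⟩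
  have hmul : ∀ g h : C(K, ℝ), g ∈ M → h ∈ M → g * h ∈ M := by
    intro g h hg hh
    induction hg using Submodule.span_induction with
    | mem g hg =>
      obtain ⟨I, rfl⟩ := hg
      induction hh using Submodule.span_induction with
      | mem h hh =>
        obtain ⟨J, rfl⟩ := hh
        have : F I * F J = ∑ A : {A : Finset (Fin (I.length + J.length)) //
            A.card = I.length}, F (List.ofFn (interleave I.get J.get A.1 A.2)) := by
          ext x
          simpa [hF] using hshuffle I J x
        rw [this]
        exact Submodule.sum_mem _ fun A _ => hmemF _
      | zero => simpa using M.zero_mem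
      | add a b _ _ ha hb => rw [mul_add]; exact M.add_mem ha hb
      | smul c a _ ha => rw [mul_smul_comm]; exact M.smul_mem c ha
    | zero => simpa using M.zero_mem
    | add a b _ _ ha hb => rw [add_mul]; exact M.add_mem ha hb
    | smul c a _ ha => rw [smul_mul_assoc]; exact M.smul_mem c ha
  have honeM : (1 : C(K, ℝ)) ∈ M := by
    have : (1 : C(K, ℝ)) = F [] := by ext x; simp [hF, hone x]
    rw [this]; exact hmemF []
  set A : Subalgebra ℝ C(K, ℝ) := M.toSubalgebra honeM hmul with hAdef
  have hsepA : A.SeparatesPoints := by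
    intro x y hxy
    obtain ⟨I, hI⟩ := hsep x y hxy
    exact ⟨F I, ⟨F I, hmemF I, rfl⟩, hI⟩
  obtain ⟨g, hg⟩ := ContinuousMap.exists_mem_subalgebra_near_continuous_of_separatesPoints
    A hsepA f hf ε hε
  have hgM : (g : C(K, ℝ)) ∈ M := g.2
  rw [hM, Submodule.mem_span_set'] at hgM
  obtain ⟨n, w, v, hv⟩ := hgM
  choose Is hIs using fun i => (v i).2
  refine ⟨n, Is, w, fun x => ?_⟩
  have hval : ∑ j, w j * S (Is j) x = (g : C(K, ℝ)) x := by
    rw [← hv]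
    rw [ContinuousMap.coe_sum, Finset.sum_apply]
    refine Finset.sum_congr rfl fun i _ => ?_
    have : ((v i : C(K, ℝ))) = F (Is i) := (hIs i).symm
    simp [this, hF, mul_comm]
  rw [hval]
  have := hg x
  rw [← Real.norm_eq_abs]
  simpa [norm_sub_rev] using this
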